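/- arXiv:1706.02516 — 5 statements merged into one kernel-verified Lean document; each statement's English description precedes it below -/
import Mathlib

section
/- Each switching map F_S is an affine involution of R^{C(n,2)} that maps the metric polytope METP(K_n) onto itself, where METP(K_n) is the set of symmetric functions d with d(i,j) ≤ d(i,k) + d(k,j) and d(i,j) + d(j,k) + d(k,i) ≤ 2 for all i, j, k. -/
/-- The switching operation `F_S` on functions of pairs. -/
def switching {n : ℕ} (S : Finset (Fin n)) (d : Fin n → Fin n → ℝ) : Fin n → Fin n → ℝ :=
  fun i j => if Xor (i ∈ S) (j ∈ S) then 1 - d i j else d i j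

/-- The metric polytope `METP(K_n)`: symmetric functions satisfying all triangle
and perimeter inequalities. -/
def metricPolytope (n : ℕ) : Set (Fin n → Fin n → ℝ) :=
  { d | (∀ i j, d i j = d j i) ∧
        (∀ i j k, d i j ≤ d i k + d k j) ∧
        (∀ i j k, d i j + d j k + d k i ≤ 2) }

lemma switching_switching {n : ℕ} (S : Finset (Fin n)) (d : Fin n → Fin n → ℝ) :
    switching S (switching S d) = d := by
  funext i j
  by_cases h : Xor (i ∈ S) (j ∈ S) <;> simp [switching, h]

lemma switching_mem {n : ℕ} (S : Finset (Fin n)) {d : Fin n → Fin n → ℝ}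
    (hd : d ∈ metricPolytope n) : switching S d ∈ metricPolytope n := by
  obtain ⟨hs, ht, hp⟩ := hd
  refine ⟨?_, ?_, ?_⟩
  · intro i j
    by_cases hi : i ∈ S <;> by_cases hj : j ∈ S <;>
      simp [switching, Xor, hi, hj, hs i j]
  · intro i j k
    by_cases hi : i ∈ S <;> by_cases hj : j ∈ S <;> by_cases hk : k ∈ S <;>
      simp [switching, Xor, hi, hj, hk] <;>
      linarith [ht i j k, ht i k j, ht k j i, ht j i k, ht k i j, ht j k i,
        hp i j k, hs i j, hs j k, hs i k]
  · intro i j k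
    by_cases hi : i ∈ S <;> by_cases hj : j ∈ S <;> by_cases hk : k ∈ S <;>
      simp [switching, Xor, hi, hj, hk] <;>
      linarith [ht i j k, ht i k j, ht k j i, ht j i k, ht k i j, ht j k i,
        hp i j k, hs i j, hs j k, hs i k]

/-- The linear part of the switching map. -/
def switchingLinear {n : ℕ} (S : Finset (Fin n)) :
    (Fin n → Fin n → ℝ) →ₗ[ℝ] (Fin n → Fin n → ℝ) where
  toFun d := fun i j => if Xor (i ∈ S) (j ∈ S) then -d i j else d i j
  map_add' d e := by
    funext i j
    by_cases h : Xor (i ∈ S) (j ∈ S) <;> simp [h] <;> ring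
  map_smul' c d := by
    funext i j
    by_cases h : Xor (i ∈ S) (j ∈ S) <;> simp [h] <;> ring

/-- each switching `F_S` is an affine involution of `ℝ^{C(n,2)}`
mapping the metric polytope `METP(K_n)` onto itself. -/
theorem switching_affine_involution_METP (n : ℕ) (S : Finset (Fin n)) :
    (switching S ∘ switching S = id) ∧
    (∃ A : (Fin n → Fin n → ℝ) →ᵃ[ℝ] (Fin n → Fin n → ℝ), ⇑A = switching S) ∧
    switching S '' metricPolytope n = metricPolytope n := by
  refine ⟨?_, ?_, ?_⟩
  · funext d
    exact switching_switching S d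
  · refine ⟨⟨switching S, switchingLinear S, ?_⟩, rfl⟩
    intro p v
    funext i j
    by_cases h : Xor (i ∈ S) (j ∈ S) <;>
      simp [switching, switchingLinear, h] <;> ring
  · ext d
    constructor
    · rintro ⟨e, he, rfl⟩
      exact switching_mem S he
    · intro hd
      exact ⟨switching S d, switching_mem S hd, switching_switching S d⟩
end

section
/- An oriented multicut δ'(S_1,...,S_r) associated to an ordered partition (S_1,...,S_r) of {1,...,n} satisfies the cycle equality d(i,j) + d(j,k) + d(k,i) = d(j,i) + d(k,j) + d(i,k) for all triples i, j, k if and only if r ≤ 2 (i.e., it is an oriented cut). -/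
/-- The oriented multicut of an ordered partition of `{1,…,n}` into `r` nonempty
parts, encoded by a surjective part-index map `p : Fin n → Fin r`:
`δ'(x,y) = 1` iff the part of `x` precedes the part of `y`. -/
def orientedMulticut {n r : ℕ} (p : Fin n → Fin r) (x y : Fin n) : ℝ :=
  if p x < p y then 1 else 0

/-- an oriented multicut satisfies the cycle equality for all
triples iff `r ≤ 2`, i.e. iff it is an oriented cut. -/
theorem multicut_cycle_equality_iff (n r : ℕ) (p : Fin n → Fin r)
    (hp : Function.Surjective p) :
    (∀ i j k : Fin n,
        orientedMulticut p i j + orientedMulticut p j k + orientedMulticut p k i =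
        orientedMulticut p j i + orientedMulticut p k j + orientedMulticut p i k) ↔
      r ≤ 2 := by
  constructor
  · intro h
    by_contra hr
    push_neg at hr
    obtain ⟨i, hi⟩ := hp ⟨0, by omega⟩
    obtain ⟨j, hj⟩ := hp ⟨1, by omega⟩
    obtain ⟨k, hk⟩ := hp ⟨2, by omega⟩
    have := h i j k
    simp only [orientedMulticut, hi, hj, hk, Fin.lt_def] at this
    norm_num at this
  · intro hr i j k
    have h1 := (p i).isLt
    have h2 := (p j).isLt
    have h3 := (p k).isLt
    simp only [orientedMulticut, Fin.lt_def]
    split_ifs <;> (try norm_num) <;> omega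
end

section
/- The oriented switching F_S preserves weightability: if d is a weightable quasi-metric on {1,...,n} with values in [0,1] satisfying d(j,i) + d(i,k) + d(k,j) ≤ 2 for all i,j,k, then F_S(d), defined by F_S(d)(i,j) = 1 - d(j,i) if |S ∩ {i,j}| = 1 and d(i,j) otherwise, is also a weightable quasi-metric satisfying the same bounds. -/
/-- The oriented switching `F_S` on (possibly non-symmetric) functions of pairs:
`F_S(d)(i,j) = 1 - d(j,i)` if exactly one of `i, j` lies in `S`, else `d(i,j)`. -/
instance xor'DecidableOfDecidable (a b : Prop) [Decidable a] [Decidable b] :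
    Decidable (Xor' a b) := by
  unfold Xor'; infer_instance

def orientedSwitching {n : ℕ} (S : Finset (Fin n)) (d : Fin n → Fin n → ℝ) :
    Fin n → Fin n → ℝ :=
  fun i j => if Xor' (i ∈ S) (j ∈ S) then 1 - d j i else d i j

/-- the oriented switching preserves weightable bounded
quasi-metrics: if `d` is a weightable quasi-metric with values in `[0,1]`
satisfying all perimeter inequalities `d(j,i)+d(i,k)+d(k,j) ≤ 2`, then so is
`F_S(d)`. -/
theorem orientedSwitching_preserves_weightable (n : ℕ) (S : Finset (Fin n))
    (d : Fin n → Fin n → ℝ)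
    (hnn : ∀ i j, 0 ≤ d i j)
    (hdiag : ∀ i, d i i = 0)
    (htri : ∀ i j k, d i j ≤ d i k + d k j)
    (hle1 : ∀ i j, d i j ≤ 1)
    (hperim : ∀ i j k, d j i + d i k + d k j ≤ 2)
    (hweight : ∃ w : Fin n → ℝ, ∀ i j, d i j + w i = d j i + w j) :
    (∀ i j, 0 ≤ orientedSwitching S d i j) ∧
    (∀ i, orientedSwitching S d i i = 0) ∧
    (∀ i j k, orientedSwitching S d i j ≤
        orientedSwitching S d i k + orientedSwitching S d k j) ∧
    (∀ i j, orientedSwitching S d i j ≤ 1) ∧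
    (∀ i j k, orientedSwitching S d j i + orientedSwitching S d i k +
        orientedSwitching S d k j ≤ 2) ∧
    (∃ w : Fin n → ℝ, ∀ i j,
        orientedSwitching S d i j + w i = orientedSwitching S d j i + w j) := by
  obtain ⟨w, hw⟩ := hweight
  refine ⟨?_, ?_, ?_, ?_, ?_, ⟨w, ?_⟩⟩
  · intro i j
    by_cases hi : i ∈ S <;> by_cases hj : j ∈ S <;>
      simp [orientedSwitching, Xor', hi, hj] <;>
      linarith [hnn i j, hle1 j i]
  · intro i
    simp [orientedSwitching, Xor', hdiag i]
  · intro i j k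
    by_cases hi : i ∈ S <;> by_cases hj : j ∈ S <;> by_cases hk : k ∈ S <;>
      simp only [orientedSwitching, Xor', hi, hj, hk] <;> simp <;>
      linarith [htri i j k, htri k i j, htri j i k, htri i k j, htri j k i,
        htri k j i, hperim i j k, hperim j i k, hperim k i j, hperim i k j,
        hperim j k i, hperim k j i]
  · intro i j
    by_cases hi : i ∈ S <;> by_cases hj : j ∈ S <;>
      simp [orientedSwitching, Xor', hi, hj] <;>
      linarith [hnn j i, hle1 i j]
  · intro i j k
    by_cases hi : i ∈ S <;> by_cases hj : j ∈ S <;> by_cases hk : k ∈ S <;>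
      simp only [orientedSwitching, Xor', hi, hj, hk] <;> simp <;>
      linarith [htri i j k, htri k i j, htri j i k, htri i k j, htri j k i,
        htri k j i, hperim i j k, hperim j i k, hperim k i j, hperim i k j,
        hperim j k i, hperim k j i]
  · intro i j
    by_cases hi : i ∈ S <;> by_cases hj : j ∈ S <;>
      simp only [orientedSwitching, Xor', hi, hj] <;> simp <;>
      linarith [hw i j, hw j i]
end

section
/- The cone QMET(G) of a graph G, defined as the projection onto the directed edges of G of the cone of quasi-metrics on the vertex set, equals the set of nonnegative functions on directed edges of G satisfying all oriented cycle inequalities: for every cycle (v_1,...,v_m) in G, d(v_1,v_m) ≤ d(v_1,v_2) + d(v_2,v_3) + ... + d(v_{m-1},v_m). -/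
open SimpleGraph

private lemma toFinset_sum_le_list_sum {α : Type*} [DecidableEq α] (f : α → ℝ)
    (hf : ∀ a, 0 ≤ f a) : ∀ L : List α, L.toFinset.sum f ≤ (L.map f).sum := by
  intro L
  induction L with
  | nil => simp
  | cons a L ih =>
    simp only [List.toFinset_cons, List.map_cons, List.sum_cons]
    by_cases h : a ∈ L.toFinset
    · rw [Finset.insert_eq_self.mpr h]
      linarith [hf a]
    · rw [Finset.sum_insert h]
      linarith

/-- The cone `QMET(K_n)` of quasi-metrics on `n` points. -/
def quasiMetricCone (n : ℕ) : Set (Fin n → Fin n → ℝ) :=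
  { d | (∀ i j, 0 ≤ d i j) ∧ (∀ i, d i i = 0) ∧ ∀ i j k, d i j ≤ d i k + d k j }

/-- for a graph `G`, the projection of `QMET(K_n)` onto the
directed edges (darts) of `G` equals the set of nonnegative functions on darts
satisfying all oriented cycle inequalities: for every cycle of `G`, given as a
path `p` from `a` to `b` closed by the edge `{a,b}`,
`f(a→b) ≤` the sum of `f` along `p`. -/
theorem QMET_graph_description (n : ℕ) (G : SimpleGraph (Fin n)) :
    (fun (d : Fin n → Fin n → ℝ) (dt : G.Dart) => d dt.toProd.1 dt.toProd.2) ''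
        quasiMetricCone n =
    { f : G.Dart → ℝ |
        (∀ dt, 0 ≤ f dt) ∧
        ∀ (a b : Fin n) (hab : G.Adj a b) (p : G.Walk a b), p.IsPath →
          f ⟨(a, b), hab⟩ ≤ (p.darts.map f).sum } := by
  classical
  ext f
  simp only [Set.mem_image, Set.mem_setOf_eq]
  constructor
  · rintro ⟨d, ⟨hpos, hzero, htri⟩, rfl⟩
    refine ⟨fun dt => hpos _ _, fun a b hab p hp => ?_⟩
    show d a b ≤ (p.darts.map fun dt => d dt.toProd.1 dt.toProd.2).sum
    clear hab hp
    induction p with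
    | nil => simp [hzero]
    | cons h q ih =>
      simp only [Walk.darts_cons, List.map_cons, List.sum_cons]
      exact (htri _ _ _).trans (add_le_add (le_refl _) ih)
  · rintro ⟨hpos, hcyc⟩
    set M : ℝ := ∑ dt : G.Dart, f dt with hM
    have hM0 : 0 ≤ M := Finset.sum_nonneg fun dt _ => hpos dt
    have hfM : ∀ dt : G.Dart, f dt ≤ M := fun dt =>
      Finset.single_le_sum (fun d _ => hpos d) (Finset.mem_univ dt)
    set S : Fin n → Fin n → Set ℝ := fun i j =>
      insert M { x | ∃ p : G.Walk i j, p.IsPath ∧ x = (p.darts.map f).sum } with hS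
    set d : Fin n → Fin n → ℝ := fun i j => sInf (S i j) with hd
    have hSne : ∀ i j, (S i j).Nonempty := fun i j => ⟨M, Set.mem_insert _ _⟩
    have hsum0 : ∀ {i j : Fin n} (p : G.Walk i j), 0 ≤ (p.darts.map f).sum := by
      intro i j p
      apply List.sum_nonneg
      intro y hy
      obtain ⟨dt, _, rfl⟩ := List.mem_map.mp hy
      exact hpos dt
    have hSbd : ∀ i j, ∀ x ∈ S i j, 0 ≤ x := by
      intro i j x hx
      rcases hx with rfl | ⟨p, hp, rfl⟩
      · exact hM0
      · exact hsum0 p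
    have hdlb : ∀ i j, 0 ≤ d i j := fun i j => le_csInf (hSne i j) (hSbd i j)
    have hdle : ∀ i j, ∀ x ∈ S i j, d i j ≤ x := fun i j x hx =>
      csInf_le ⟨0, fun y hy => hSbd i j y hy⟩ hx
    -- zero on the diagonal
    have hzero : ∀ i, d i i = 0 := by
      intro i
      refine le_antisymm ?_ (hdlb i i)
      have : (0 : ℝ) ∈ S i i := Or.inr ⟨Walk.nil, Walk.IsPath.nil, by simp⟩
      simpa using hdle i i 0 this
    -- edge values
    have hedge : ∀ (a b : Fin n) (hab : G.Adj a b), d a b = f ⟨(a, b), hab⟩ := by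
      intro a b hab
      refine le_antisymm ?_ ?_
      · refine hdle a b _ (Or.inr ⟨Walk.cons hab Walk.nil, ?_, by simp⟩)
        simp [Walk.isPath_def, hab.ne]
      · refine le_csInf (hSne a b) ?_
        intro x hx
        rcases hx with rfl | ⟨p, hp, rfl⟩
        · exact hfM _
        · exact hcyc a b hab p hp
    -- triangle inequality
    have htri : ∀ i j k, d i j ≤ d i k + d k j := by
      intro i j k
      have key : ∀ x ∈ S i k, ∀ y ∈ S k j, d i j ≤ x + y := by
        intro x hx y hy
        rcases hx with rfl | ⟨p, hp, rfl⟩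
        · have h1 := hdle i j M (Set.mem_insert _ _)
          have h2 := hSbd k j y hy
          linarith
        rcases hy with rfl | ⟨q, hq, rfl⟩
        · have h1 := hdle i j M (Set.mem_insert _ _)
          have h2 := hsum0 p
          linarith
        · set r := (p.append q).bypass with hr
          have h1 : d i j ≤ (r.darts.map f).sum :=
            hdle i j _ (Or.inr ⟨r, (p.append q).bypass_isPath, rfl⟩)
          have hnd : r.darts.Nodup := by
            have hh := ((p.append q).bypass_isPath).edges_nodup
            rw [SimpleGraph.Walk.edges] at hh
            exact List.Nodup.of_map _ hh
          have hsub : r.darts.toFinset ⊆ (p.append q).darts.toFinset := by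
            intro dt hdt
            rw [List.mem_toFinset] at hdt ⊢
            exact (p.append q).darts_bypass_subset hdt
          have h2 : (r.darts.map f).sum ≤ ((p.append q).darts.map f).sum := by
            calc (r.darts.map f).sum = r.darts.toFinset.sum f := by
                  rw [List.sum_toFinset f hnd]
              _ ≤ (p.append q).darts.toFinset.sum f :=
                  Finset.sum_le_sum_of_subset_of_nonneg hsub (fun dt _ _ => hpos dt)
              _ ≤ ((p.append q).darts.map f).sum :=
                  toFinset_sum_le_list_sum f hpos _
          have h3 : ((p.append q).darts.map f).sum
              = (p.darts.map f).sum + (q.darts.map f).sum := by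
            rw [Walk.darts_append, List.map_append, List.sum_append]
          linarith
      have h1 : ∀ y ∈ S k j, d i j - y ≤ d i k := fun y hy =>
        le_csInf (hSne i k) (fun x hx => by linarith [key x hx y hy])
      have h2 : d i j - d i k ≤ d k j :=
        le_csInf (hSne k j) (fun y hy => by linarith [h1 y hy])
      linarith
    refine ⟨d, ⟨hdlb, hzero, htri⟩, ?_⟩
    funext dt
    have := hedge dt.toProd.1 dt.toProd.2 dt.adj
    simpa using this
end

section
/- Let K ⊆ K' be m-dimensional complexes on {1,...,n} with K' = K ∪ {Δ} for a single simplex Δ ∉ K. If d ∈ HMET(K) (d is nonnegative on K and for every closed manifold M ⊆ K and every Δ_i ∈ M, d(Δ_i) ≤ Σ_{Δ_j ∈ M, j ≠ i} d(Δ_j)), then there exists a nonnegative value α such that extending d by d(Δ) = α yields an element of HMET(K'). -/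
/-- `M` is a closed `m`-dimensional manifold: every `m`-element subset of the
vertex set is contained in an even number of members of `M`. -/
def IsClosedManifold (n m : ℕ) (M : Finset (Finset (Fin n))) : Prop :=
  ∀ F : Finset (Fin n), F.card = m → Even ((M.filter (fun Δ => F ⊆ Δ)).card)

lemma even_card_symmDiff {α : Type*} [DecidableEq α] (s t : Finset α)
    (hs : Even s.card) (ht : Even t.card) : Even ((symmDiff s t).card) := by
  have h1 : (s \ t).card + (s ∩ t).card = s.card := Finset.card_sdiff_add_card_inter s t
  have h2 : (t \ s).card + (t ∩ s).card = t.card := Finset.card_sdiff_add_card_inter t s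
  have h3 : (symmDiff s t).card = (s \ t).card + (t \ s).card := by
    rw [symmDiff_def]
    exact Finset.card_union_of_disjoint (disjoint_sdiff_sdiff)
  have h4 : (s ∩ t).card = (t ∩ s).card := by rw [Finset.inter_comm]
  rw [h3]
  rw [Nat.even_iff] at hs ht ⊢
  omega

lemma isClosedManifold_symmDiff {n m : ℕ} {M1 M2 : Finset (Finset (Fin n))}
    (h1 : IsClosedManifold n m M1) (h2 : IsClosedManifold n m M2) :
    IsClosedManifold n m (symmDiff M1 M2) := by
  intro F hF
  have hfilt : (symmDiff M1 M2).filter (fun Δ => F ⊆ Δ) =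
      symmDiff (M1.filter (fun Δ => F ⊆ Δ)) (M2.filter (fun Δ => F ⊆ Δ)) := by
    ext x; simp [Finset.mem_symmDiff, Finset.mem_filter]; tauto
  rw [hfilt]
  exact even_card_symmDiff _ _ (h1 F hF) (h2 F hF)

/-- if `d ∈ HMET(K)` and `Δ ∉ K` is a further `m`-simplex, then
there is a nonnegative value `α` such that extending `d` by `d(Δ) = α` gives an
element of `HMET(K ∪ {Δ})`. -/
theorem HMET_extension (n m : ℕ) (K : Finset (Finset (Fin n)))
    (hK : ∀ Δ' ∈ K, Δ'.card = m + 1)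
    (Δ : Finset (Fin n)) (hΔcard : Δ.card = m + 1) (hΔ : Δ ∉ K)
    (d : Finset (Fin n) → ℝ)
    (hnn : ∀ Δ' ∈ K, 0 ≤ d Δ')
    (hineq : ∀ M ⊆ K, IsClosedManifold n m M →
      ∀ Δi ∈ M, d Δi ≤ ∑ Δj ∈ M.erase Δi, d Δj) :
    ∃ α : ℝ, 0 ≤ α ∧
      (∀ Δ' ∈ insert Δ K, 0 ≤ Function.update d Δ α Δ') ∧
      (∀ M ⊆ insert Δ K, IsClosedManifold n m M →
        ∀ Δi ∈ M, Function.update d Δ α Δi ≤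
          ∑ Δj ∈ M.erase Δi, Function.update d Δ α Δj) := by
  classical
  set cands : Finset ℝ := insert 0 ((((insert Δ K).powerset ×ˢ K).filter
      (fun p => Δ ∈ p.1 ∧ IsClosedManifold n m p.1 ∧ p.2 ∈ p.1)).image
      (fun p => d p.2 - ∑ x ∈ (p.1.erase Δ).erase p.2, d x)) with hcands
  have hne : cands.Nonempty := ⟨0, Finset.mem_insert_self _ _⟩
  set α := cands.max' hne with hα
  -- the key upper bound: every candidate is at most `∑_{M2 \ {Δ}} d` for every
  -- closed manifold `M2 ⊆ insert Δ K` containing `Δ`.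
  have key : ∀ M2 ⊆ insert Δ K, IsClosedManifold n m M2 → Δ ∈ M2 →
      ∀ c ∈ cands, c ≤ ∑ x ∈ M2.erase Δ, d x := by
    intro M2 hM2 hcl2 hΔ2 c hc
    have hsubK2 : M2.erase Δ ⊆ K := by
      intro x hx
      rcases Finset.mem_insert.mp (hM2 (Finset.mem_of_mem_erase hx)) with h | h
      · exact absurd h (Finset.ne_of_mem_erase hx)
      · exact h
    have hBnn : 0 ≤ ∑ x ∈ M2.erase Δ, d x :=
      Finset.sum_nonneg fun x hx => hnn x (hsubK2 hx)
    rcases Finset.mem_insert.mp hc with rfl | hc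
    · exact hBnn
    obtain ⟨⟨M1, Δi⟩, hp, rfl⟩ := Finset.mem_image.mp hc
    simp only [Finset.mem_filter, Finset.mem_product, Finset.mem_powerset] at hp
    obtain ⟨⟨hM1, hΔiK⟩, hΔ1, hcl1, hΔiM1⟩ := hp
    have hΔine : Δi ≠ Δ := fun h => hΔ (h ▸ hΔiK)
    have hsubK1 : M1.erase Δ ⊆ K := by
      intro x hx
      rcases Finset.mem_insert.mp (hM1 (Finset.mem_of_mem_erase hx)) with h | h
      · exact absurd h (Finset.ne_of_mem_erase hx)
      · exact h
    have hAsub : (M1.erase Δ).erase Δi ⊆ K := fun x hx => hsubK1 (Finset.mem_of_mem_erase hx)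
    have hAnn : 0 ≤ ∑ x ∈ (M1.erase Δ).erase Δi, d x :=
      Finset.sum_nonneg fun x hx => hnn x (hAsub hx)
    rw [sub_le_iff_le_add]
    by_cases hmem : Δi ∈ M2
    · have hle : d Δi ≤ ∑ x ∈ M2.erase Δ, d x :=
        Finset.single_le_sum (fun x hx => hnn x (hsubK2 hx))
          (Finset.mem_erase.mpr ⟨hΔine, hmem⟩)
      linarith
    · set N := symmDiff M1 M2 with hN
      have hNK : N ⊆ K := by
        intro x hx
        rw [hN, Finset.mem_symmDiff] at hx
        rcases hx with ⟨hx1, hx2⟩ | ⟨hx1, hx2⟩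
        · have hxΔ : x ≠ Δ := fun h => hx2 (h ▸ hΔ2)
          exact hsubK1 (Finset.mem_erase.mpr ⟨hxΔ, hx1⟩)
        · have hxΔ : x ≠ Δ := fun h => hx2 (h ▸ hΔ1)
          exact hsubK2 (Finset.mem_erase.mpr ⟨hxΔ, hx1⟩)
      have hNcl : IsClosedManifold n m N := isClosedManifold_symmDiff hcl1 hcl2
      have hΔiN : Δi ∈ N := by
        rw [hN, Finset.mem_symmDiff]; exact Or.inl ⟨hΔiM1, hmem⟩
      have h5 := hineq N hNK hNcl Δi hΔiN
      have hsub : N.erase Δi ⊆ ((M1.erase Δ).erase Δi) ∪ (M2.erase Δ) := by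
        intro x hx
        obtain ⟨hxne, hxN⟩ := Finset.mem_erase.mp hx
        rw [hN, Finset.mem_symmDiff] at hxN
        rcases hxN with ⟨hx1, hx2⟩ | ⟨hx1, hx2⟩
        · have hxΔ : x ≠ Δ := fun h => hx2 (h ▸ hΔ2)
          exact Finset.mem_union_left _
            (Finset.mem_erase.mpr ⟨hxne, Finset.mem_erase.mpr ⟨hxΔ, hx1⟩⟩)
        · have hxΔ : x ≠ Δ := fun h => hx2 (h ▸ hΔ1)
          exact Finset.mem_union_right _ (Finset.mem_erase.mpr ⟨hxΔ, hx1⟩)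
      have hUK : ((M1.erase Δ).erase Δi) ∪ (M2.erase Δ) ⊆ K :=
        Finset.union_subset hAsub hsubK2
      have h6 : ∑ x ∈ N.erase Δi, d x ≤
          ∑ x ∈ ((M1.erase Δ).erase Δi) ∪ (M2.erase Δ), d x :=
        Finset.sum_le_sum_of_subset_of_nonneg hsub (fun x hx _ => hnn x (hUK hx))
      have h7 : ∑ x ∈ ((M1.erase Δ).erase Δi) ∪ (M2.erase Δ), d x
            + ∑ x ∈ ((M1.erase Δ).erase Δi) ∩ (M2.erase Δ), d x
          = ∑ x ∈ (M1.erase Δ).erase Δi, d x + ∑ x ∈ M2.erase Δ, d x :=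
        Finset.sum_union_inter
      have h8 : 0 ≤ ∑ x ∈ ((M1.erase Δ).erase Δi) ∩ (M2.erase Δ), d x :=
        Finset.sum_nonneg fun x hx =>
          hnn x (hAsub (Finset.mem_of_mem_inter_left hx))
      linarith
  refine ⟨α, Finset.le_max' _ 0 (Finset.mem_insert_self _ _), ?_, ?_⟩
  · intro Δ' hΔ'
    rcases Finset.mem_insert.mp hΔ' with rfl | h
    · rw [Function.update_self]
      exact Finset.le_max' _ 0 (Finset.mem_insert_self _ _)
    · rw [Function.update_of_ne (fun hh : Δ' = Δ => hΔ (hh ▸ h))]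
      exact hnn _ h
  · intro M hM hcl Δi hΔi
    by_cases hΔM : Δ ∈ M
    · by_cases hEq : Δi = Δ
      · subst hEq
        rw [Function.update_self]
        have hrw : ∑ Δj ∈ M.erase Δi, Function.update d Δi α Δj
            = ∑ Δj ∈ M.erase Δi, d Δj :=
          Finset.sum_congr rfl fun x hx =>
            Function.update_of_ne (Finset.ne_of_mem_erase hx) _ _
        rw [hrw]
        exact Finset.max'_le _ hne _ (fun c hc => key M hM hcl hΔM c hc)
      · rw [Function.update_of_ne hEq]
        have hΔ' : Δ ∈ M.erase Δi :=
          Finset.mem_erase.mpr ⟨fun h => hEq h.symm, hΔM⟩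
        rw [← Finset.add_sum_erase _ _ hΔ', Function.update_self]
        have hrw : ∑ Δj ∈ (M.erase Δi).erase Δ, Function.update d Δ α Δj
            = ∑ Δj ∈ (M.erase Δi).erase Δ, d Δj :=
          Finset.sum_congr rfl fun x hx =>
            Function.update_of_ne (Finset.ne_of_mem_erase hx) _ _
        rw [hrw]
        have hΔiK : Δi ∈ K := by
          rcases Finset.mem_insert.mp (hM hΔi) with h | h
          · exact absurd h hEq
          · exact h
        have hcand : d Δi - ∑ x ∈ (M.erase Δ).erase Δi, d x ∈ cands := by
          refine Finset.mem_insert_of_mem (Finset.mem_image.mpr ⟨(M, Δi), ?_, rfl⟩)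
          simp only [Finset.mem_filter, Finset.mem_product, Finset.mem_powerset]
          exact ⟨⟨hM, hΔiK⟩, hΔM, hcl, hΔi⟩
        have hle := Finset.le_max' cands _ hcand
        have herase : (M.erase Δi).erase Δ = (M.erase Δ).erase Δi :=
          Finset.erase_right_comm
        rw [herase]
        linarith
    · have hMK : M ⊆ K := by
        intro x hx
        rcases Finset.mem_insert.mp (hM hx) with h | h
        · exact absurd (h ▸ hx) hΔM
        · exact h
      have h := hineq M hMK hcl Δi hΔi
      rw [Function.update_of_ne (fun hh : Δi = Δ => hΔM (hh ▸ hΔi))]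
      have hrw : ∑ Δj ∈ M.erase Δi, Function.update d Δ α Δj
          = ∑ Δj ∈ M.erase Δi, d Δj :=
        Finset.sum_congr rfl fun x hx =>
          Function.update_of_ne (fun hh : x = Δ => hΔM (hh ▸ Finset.mem_of_mem_erase hx)) _ _
      rw [hrw]
      exact h
end
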